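/- Suppose ν > 0, 0 < λ ≤ 1/2, ν ≥ 1, and λ/ν ∈ (0,1). If there is an infinite family of {±1}-protocols with parameters (kᵢ,nᵢ,ℓᵢ), kᵢ → ∞, nᵢ/kᵢ → ν and ℓᵢ/kᵢ → λ, then H(λ/ν) ≥ 1/ν, where H is the binary entropy function. -/

import Mathlib

open Finset Module Submodule

/-- Coordinate selection: a subspace `V` of `Fin k → ℝ` is determined by `finrank V` coordinates. -/
lemma exists_coords {k : ℕ} (V : Submodule ℝ (Fin k → ℝ)) :
    ∃ S : Finset (Fin k), S.card ≤ Module.finrank ℝ V ∧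
      ∀ x ∈ V, (∀ i ∈ S, x i = 0) → x = 0 := by
  classical
  rcases Nat.eq_zero_or_pos k with rfl | hk
  · exact ⟨∅, by simp, fun x _ _ => funext fun i => i.elim0⟩
  have : Nonempty (Fin k) := ⟨⟨0, hk⟩⟩
  set φ : Fin k → Module.Dual ℝ V :=
    fun i => (LinearMap.proj i : (Fin k → ℝ) →ₗ[ℝ] ℝ).comp V.subtype with hφ
  obtain ⟨b, hbsub, hbspan, hbli⟩ := exists_linearIndependent ℝ (Set.range φ)
  have hbfin : b.Finite := by
    have := hbli.lt_aleph0_of_finite (M := Module.Dual ℝ V)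
    exact Set.finite_coe_iff.mp (Cardinal.lt_aleph0_iff_finite.mp this)
  have hcard : hbfin.toFinset.card ≤ Module.finrank ℝ V := by
    have h1 : hbfin.toFinset.card ≤ Module.finrank ℝ (Module.Dual ℝ V) := by
      have : LinearIndependent ℝ (fun x : hbfin.toFinset => (x : Module.Dual ℝ V)) := by
        apply hbli.comp (fun x : hbfin.toFinset => (⟨x.1, hbfin.mem_toFinset.mp x.2⟩ : b))
        intro x y hxy
        have h2 := congrArg Subtype.val hxy
        simp only at h2
        exact Subtype.ext h2
      simpa [Fintype.card_coe] using this.fintype_card_le_finrank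
    rwa [Subspace.dual_finrank_eq] at h1
  refine ⟨hbfin.toFinset.image (Function.invFun φ), le_trans (card_image_le) hcard, ?_⟩
  intro x hx hxS
  have key : ∀ f ∈ span ℝ b, f ⟨x, hx⟩ = 0 := by
    intro f hf
    induction hf using span_induction with
    | mem f hfb =>
      obtain ⟨i, hi⟩ := hbsub hfb
      have hinv : φ (Function.invFun φ f) = f := Function.invFun_eq ⟨i, hi⟩
      have hmem : Function.invFun φ f ∈ hbfin.toFinset.image (Function.invFun φ) :=
        mem_image_of_mem _ (hbfin.mem_toFinset.mpr hfb)
      have := hxS _ hmem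
      calc f ⟨x, hx⟩ = φ (Function.invFun φ f) ⟨x, hx⟩ := by rw [hinv]
        _ = x (Function.invFun φ f) := rfl
        _ = 0 := this
    | zero => simp
    | add f g _ _ hf hg => simp [hf, hg]
    | smul c f _ hf => simp [hf]
  have hall : ∀ i, x i = 0 := by
    intro i
    have : φ i ∈ span ℝ (Set.range φ) := subset_span (Set.mem_range_self i)
    rw [← hbspan] at this
    exact key _ this
  funext i; exact hall i

/-- At most `2^t` sign vectors lie in a subspace of dimension at most `t`. -/
lemma cube_card_le {k t : ℕ} (V : Submodule ℝ (Fin k → ℝ)) (hV : Module.finrank ℝ V ≤ t)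
    (F : Finset (Fin k → ℝ)) (hF : ∀ w ∈ F, (∀ i, w i = 1 ∨ w i = -1) ∧ w ∈ V) :
    F.card ≤ 2 ^ t := by
  classical
  obtain ⟨S, hScard, hSdet⟩ := exists_coords V
  have h1 : F.card ≤ Fintype.card ({i // i ∈ S} → Bool) := by
    apply Finset.card_le_card_of_injOn (fun w => fun i : {i // i ∈ S} => decide (w i.1 = 1))
      (fun _ _ => Finset.mem_univ _)
    intro w hw w' hw' h
    obtain ⟨hwpm, hwV⟩ := hF w hw
    obtain ⟨hwpm', hwV'⟩ := hF w' hw'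
    have heq : ∀ i ∈ S, w i = w' i := by
      intro i hi
      have := congrFun h ⟨i, hi⟩
      simp only [decide_eq_decide] at this
      rcases hwpm i with h1 | h1 <;> rcases hwpm' i with h2 | h2 <;>
        simp [h1, h2] at this ⊢ <;> norm_num [h1, h2] at this
    have : w - w' = 0 := hSdet _ (V.sub_mem hwV hwV') (fun i hi => by
      simp [heq i hi])
    have := sub_eq_zero.mp this
    exact this
  calc F.card ≤ Fintype.card ({i // i ∈ S} → Bool) := h1
    _ = 2 ^ S.card := by simp [Fintype.card_fun, Fintype.card_coe]
    _ ≤ 2 ^ t := Nat.pow_le_pow_right (by norm_num) (le_trans hScard hV)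



/-- The binary entropy function (base-2 logarithm, with `H 0 = H 1 = 0`). -/
noncomputable def binH (p : ℝ) : ℝ :=
  -p * Real.logb 2 p - (1 - p) * Real.logb 2 (1 - p)

/-- A `{±1}`-protocol with parameters `(k, n, ℓ)` exists. -/
def ProtocolExists (k n ℓ : ℕ) : Prop :=
  ∃ (D : Matrix (Fin k) (Fin n) ℝ) (A : Matrix (Fin n) (Fin (2 ^ k)) ℝ),
    (∀ w : Fin k → ℝ, (∀ i, w i = 1 ∨ w i = -1) → ∃ j, ∀ i, (D * A) i j = w i) ∧
    (∀ j, Set.ncard {i | A i j ≠ 0} ≤ ℓ)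

/-- The key counting bound: `2^k ≤ (2ℓ+1)·C(n,ℓ)`. -/
lemma protocol_card_bound {k n ℓ : ℕ} (hl1 : 1 ≤ ℓ) (h2l : 2 * ℓ ≤ n)
    (hp : ProtocolExists k n ℓ) : 2 ^ k ≤ (2 * ℓ + 1) * n.choose ℓ := by
  classical
  obtain ⟨D, A, hW, hsupp⟩ := hp
  set colD : Fin n → (Fin k → ℝ) := fun x => fun i => D i x with hcolD
  set cube : Finset (Fin k → ℝ) :=
    (Finset.univ : Finset (Fin k → Bool)).image (fun b i => if b i then (1:ℝ) else -1)
    with hcube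
  have hcubecard : cube.card = 2 ^ k := by
    rw [hcube, Finset.card_image_of_injective _ ?_, Finset.card_univ]
    · simp
    · intro b b' h
      funext i
      have := congrFun h i
      by_cases hb : b i <;> by_cases hb' : b' i <;>
        simp [hb, hb'] at this ⊢ <;> norm_num at this
  have hmem : ∀ w ∈ cube, ∀ i, w i = 1 ∨ w i = -1 := by
    intro w hw i
    rw [hcube, Finset.mem_image] at hw
    obtain ⟨b, _, rfl⟩ := hw
    by_cases hb : b i <;> simp [hb]
  have hexS : ∀ w ∈ cube, ∃ S : Finset (Fin n), S.card = ℓ ∧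
      ∀ T : Finset (Fin n), S ⊆ T →
        w ∈ Submodule.span ℝ (↑(T.image colD) : Set (Fin k → ℝ)) := by
    intro w hw
    obtain ⟨j, hj⟩ := hW w (hmem w hw)
    set a : Fin n → ℝ := fun x => A x j with ha
    have hfin : {x | a x ≠ 0}.Finite := Set.toFinite _
    have hcard : hfin.toFinset.card ≤ ℓ := by
      have := hsupp j
      rwa [Set.ncard_eq_toFinset_card _ hfin] at this
    obtain ⟨S, hsub, -, hScard⟩ :=
      Finset.exists_subsuperset_card_eq (Finset.subset_univ hfin.toFinset) hcard
        (by simp only [Finset.card_univ, Fintype.card_fin]; omega)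
    refine ⟨S, hScard, ?_⟩
    intro T hST
    have hw_eq : w = ∑ x ∈ T, a x • colD x := by
      funext i
      rw [Finset.sum_apply]
      have h1 : w i = ∑ x : Fin n, D i x * a x := by rw [← hj i, Matrix.mul_apply]
      rw [h1, ← Finset.sum_subset (Finset.subset_univ T)]
      · exact Finset.sum_congr rfl fun x hx => by simp [hcolD, mul_comm]
      · intro x _ hx
        have hax : a x = 0 := by
          by_contra h
          exact hx (hST (hsub (hfin.mem_toFinset.mpr h)))
        simp [hax]
    rw [hw_eq]
    exact Submodule.sum_mem _ fun x hx =>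
      Submodule.smul_mem _ _ (Submodule.subset_span (by
        simp only [Finset.coe_image, Set.mem_image, Finset.mem_coe]
        exact ⟨x, hx, rfl⟩))
  choose! S hScard hSspan using hexS
  set P := Finset.powersetCard (2 * ℓ) (Finset.univ : Finset (Fin n)) with hP
  have hcount1 : ∀ w ∈ cube, (P.filter (fun T => S w ⊆ T)).card = (n - ℓ).choose ℓ := by
    intro w hw
    have hSw : (S w).card = ℓ := hScard w hw
    rw [show (n - ℓ).choose ℓ = ((S w)ᶜ.card).choose ℓ by
        rw [Finset.card_compl, Fintype.card_fin, hSw],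
      ← Finset.card_powersetCard]
    apply Finset.card_bij' (fun T _ => T \ S w) (fun U _ => U ∪ S w)
    · intro T hT
      rw [Finset.mem_filter, hP, Finset.mem_powersetCard] at hT
      obtain ⟨⟨-, hTcard⟩, hST⟩ := hT
      rw [Finset.mem_powersetCard]
      constructor
      · intro x hx
        rw [Finset.mem_sdiff] at hx
        simp [Finset.mem_compl, hx.2]
      · rw [Finset.card_sdiff_of_subset hST, hTcard, hSw]; omega
    · intro U hU
      rw [Finset.mem_powersetCard] at hU
      obtain ⟨hUsub, hUcard⟩ := hU
      have hdisj : Disjoint U (S w) := by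
        rw [Finset.disjoint_left]
        intro x hxU hxS
        have := hUsub hxU
        simp [Finset.mem_compl] at this
        exact this hxS
      rw [Finset.mem_filter, hP, Finset.mem_powersetCard]
      refine ⟨⟨Finset.subset_univ _, ?_⟩, Finset.subset_union_right⟩
      rw [Finset.card_union_of_disjoint hdisj, hUcard, hSw]; omega
    · intro T hT
      rw [Finset.mem_filter] at hT
      exact Finset.sdiff_union_of_subset hT.2
    · intro U hU
      rw [Finset.mem_powersetCard] at hU
      apply Finset.union_sdiff_cancel_right
      rw [Finset.disjoint_left]
      intro x hxU hxS
      have := hU.1 hxU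
      simp [Finset.mem_compl] at this
      exact this hxS
  have hcount2 : ∀ T ∈ P, (cube.filter (fun w => S w ⊆ T)).card ≤ 2 ^ (2 * ℓ) := by
    intro T hT
    rw [hP, Finset.mem_powersetCard] at hT
    apply cube_card_le (Submodule.span ℝ (↑(T.image colD) : Set (Fin k → ℝ)))
    · calc Module.finrank ℝ (Submodule.span ℝ (↑(T.image colD) : Set (Fin k → ℝ)))
          ≤ (T.image colD).card := finrank_span_finset_le_card _
        _ ≤ T.card := Finset.card_image_le
        _ = 2 * ℓ := hT.2
    · intro w hw
      rw [Finset.mem_filter] at hw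
      exact ⟨hmem w hw.1, hSspan w hw.1 T hw.2⟩
  have key : 2 ^ k * (n - ℓ).choose ℓ ≤ n.choose (2 * ℓ) * 2 ^ (2 * ℓ) := by
    calc 2 ^ k * (n - ℓ).choose ℓ
        = ∑ w ∈ cube, (P.filter (fun T => S w ⊆ T)).card := by
          rw [Finset.sum_congr rfl hcount1, Finset.sum_const, hcubecard, smul_eq_mul]
      _ = ∑ T ∈ P, (cube.filter (fun w => S w ⊆ T)).card := by
          simp_rw [Finset.card_filter]
          rw [Finset.sum_comm]
      _ ≤ ∑ _T ∈ P, 2 ^ (2 * ℓ) := Finset.sum_le_sum hcount2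
      _ = n.choose (2 * ℓ) * 2 ^ (2 * ℓ) := by
          rw [Finset.sum_const, hP, Finset.card_powersetCard, Finset.card_univ,
            Fintype.card_fin, smul_eq_mul]
  have hpos1 : 0 < (n - ℓ).choose ℓ := Nat.choose_pos (by omega)
  have hpos2 : 0 < (2 * ℓ).choose ℓ := Nat.choose_pos (by omega)
  have hcb : 2 ^ (2 * ℓ) ≤ (2 * ℓ + 1) * (2 * ℓ).choose ℓ := by
    have := Nat.four_pow_le_two_mul_add_one_mul_central_binom ℓ
    calc 2 ^ (2 * ℓ) = 4 ^ ℓ := by rw [pow_mul]; norm_num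
      _ ≤ (2 * ℓ + 1) * (2 * ℓ).choose ℓ := this
  have hid : n.choose (2 * ℓ) * (2 * ℓ).choose ℓ = n.choose ℓ * (n - ℓ).choose ℓ := by
    have := Nat.choose_mul (n := n) (by omega : ℓ ≤ 2 * ℓ)
    simpa [show 2 * ℓ - ℓ = ℓ by omega] using this
  have main : 2 ^ k * ((n - ℓ).choose ℓ * (2 * ℓ).choose ℓ) ≤
      ((2 * ℓ + 1) * n.choose ℓ) * ((n - ℓ).choose ℓ * (2 * ℓ).choose ℓ) := by
    calc 2 ^ k * ((n - ℓ).choose ℓ * (2 * ℓ).choose ℓ)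
        = (2 ^ k * (n - ℓ).choose ℓ) * (2 * ℓ).choose ℓ := by ring
      _ ≤ (n.choose (2 * ℓ) * 2 ^ (2 * ℓ)) * (2 * ℓ).choose ℓ :=
          Nat.mul_le_mul_right _ key
      _ = (n.choose (2 * ℓ) * (2 * ℓ).choose ℓ) * 2 ^ (2 * ℓ) := by ring
      _ = (n.choose ℓ * (n - ℓ).choose ℓ) * 2 ^ (2 * ℓ) := by rw [hid]
      _ ≤ (n.choose ℓ * (n - ℓ).choose ℓ) * ((2 * ℓ + 1) * (2 * ℓ).choose ℓ) :=
          Nat.mul_le_mul_left _ hcb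
      _ = ((2 * ℓ + 1) * n.choose ℓ) * ((n - ℓ).choose ℓ * (2 * ℓ).choose ℓ) := by ring
  exact Nat.le_of_mul_le_mul_right main (Nat.mul_pos hpos1 hpos2)

/-- Entropy bound: `log₂ C(n,ℓ) ≤ n · H(ℓ/n)` for `0 < ℓ < n`. -/
lemma logb_choose_le {n ℓ : ℕ} (h1 : 1 ≤ ℓ) (hn : ℓ < n) :
    Real.logb 2 (n.choose ℓ) ≤ (n : ℝ) * binH ((ℓ : ℝ) / n) := by
  have hn0 : (0:ℝ) < n := by
    have : 0 < n := by omega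
    exact_mod_cast this
  set p : ℝ := (ℓ : ℝ) / n with hp
  have hℓ0 : (0:ℝ) < (ℓ : ℝ) := by exact_mod_cast h1
  have hp0 : 0 < p := div_pos hℓ0 hn0
  have hp1 : p < 1 := by
    rw [hp, div_lt_one hn0]; exact_mod_cast hn
  have hq0 : 0 < 1 - p := by linarith
  have hC0 : (0:ℝ) < (n.choose ℓ : ℝ) := by
    exact_mod_cast Nat.choose_pos hn.le
  have key : (n.choose ℓ : ℝ) * (p ^ ℓ * (1 - p) ^ (n - ℓ)) ≤ 1 := by
    have hbin := add_pow p (1 - p) n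
    have hsum : ∑ i ∈ Finset.range (n + 1), p ^ i * (1 - p) ^ (n - i) * (n.choose i : ℝ) = 1 := by
      rw [← hbin]; norm_num
    have hterm : p ^ ℓ * (1 - p) ^ (n - ℓ) * (n.choose ℓ : ℝ)
        ≤ ∑ i ∈ Finset.range (n + 1), p ^ i * (1 - p) ^ (n - i) * (n.choose i : ℝ) := by
      apply Finset.single_le_sum (f := fun i => p ^ i * (1 - p) ^ (n - i) * (n.choose i : ℝ))
      · intro i _; positivity
      · exact Finset.mem_range.mpr (by omega)
    calc (n.choose ℓ : ℝ) * (p ^ ℓ * (1 - p) ^ (n - ℓ))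
        = p ^ ℓ * (1 - p) ^ (n - ℓ) * (n.choose ℓ : ℝ) := by ring
      _ ≤ _ := hterm
      _ = 1 := hsum
  have hlog : Real.logb 2 ((n.choose ℓ : ℝ) * (p ^ ℓ * (1 - p) ^ (n - ℓ))) ≤ 0 := by
    apply Real.logb_nonpos (by norm_num) (by positivity) key
  rw [Real.logb_mul (by positivity) (by positivity),
    Real.logb_mul (by positivity) (by positivity),
    Real.logb_pow, Real.logb_pow] at hlog
  have hcast : ((n - ℓ : ℕ) : ℝ) = (n : ℝ) - (ℓ : ℝ) := by
    rw [Nat.cast_sub hn.le]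
  have hℓ : (ℓ : ℝ) = n * p := by rw [hp]; field_simp
  have hbinH : (n : ℝ) * binH p = -(ℓ : ℝ) * Real.logb 2 p
      - ((n : ℝ) - ℓ) * Real.logb 2 (1 - p) := by
    rw [binH, hℓ]; ring
  rw [hbinH]
  rw [hcast] at hlog
  linarith [hlog]

/-- Asymptotic form of the improved lower bound: any `{±1}`-feasible pair `(ν,λ)` with
`λ ≤ 1/2` must satisfy `H(λ/ν) ≥ 1/ν`. -/
theorem asymptotic_lower_bound (ν lam : ℝ) (hν : 1 ≤ ν) (hlam0 : 0 < lam)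
    (hlam : lam ≤ 1 / 2) (hratio : lam / ν ∈ Set.Ioo (0 : ℝ) 1)
    (k n ℓ : ℕ → ℕ)
    (hproto : ∀ i, ProtocolExists (k i) (n i) (ℓ i))
    (hk : Filter.Tendsto (fun i => (k i : ℝ)) Filter.atTop Filter.atTop)
    (hn : Filter.Tendsto (fun i => (n i : ℝ) / (k i : ℝ)) Filter.atTop (nhds ν))
    (hℓ : Filter.Tendsto (fun i => (ℓ i : ℝ) / (k i : ℝ)) Filter.atTop (nhds lam)) :
    binH (lam / ν) ≥ 1 / ν := by
  have hν0 : (0:ℝ) < ν := lt_of_lt_of_le one_pos hν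
  have hcont : Continuous binH := by
    have heq : binH = fun p => (Real.negMulLog p + Real.negMulLog (1 - p)) / Real.log 2 := by
      funext p
      simp only [binH, Real.negMulLog, Real.logb]
      ring
    rw [heq]
    exact (Real.continuous_negMulLog.add
      (Real.continuous_negMulLog.comp (continuous_const.sub continuous_id))).div_const _
  rw [ge_iff_le, div_le_iff₀ hν0]
  by_cases hhalf : lam / ν = 1 / 2
  · rw [hhalf]
    have hH : binH (1 / 2 : ℝ) = 1 := by
      have h2 : Real.logb 2 (1/2 : ℝ) = -1 := by
        rw [show (1/2 : ℝ) = 2⁻¹ by norm_num, Real.logb_inv,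
          Real.logb_self_eq_one (by norm_num)]
      rw [binH]; norm_num [h2]
    rw [hH]; linarith
  · have hlt : lam / ν < 1 / 2 :=
      lt_of_le_of_ne (le_trans (div_le_self hlam0.le hν) hlam) hhalf
    have hkpos : ∀ᶠ i in Filter.atTop, (0:ℝ) < (k i : ℝ) := hk.eventually_gt_atTop 0
    have hℓatTop : Filter.Tendsto (fun i => (ℓ i : ℝ)) Filter.atTop Filter.atTop := by
      have h1 := Filter.Tendsto.pos_mul_atTop hlam0 hℓ hk
      apply h1.congr'
      filter_upwards [hkpos] with i hki
      field_simp
    have hnatTop : Filter.Tendsto (fun i => (n i : ℝ)) Filter.atTop Filter.atTop := by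
      have h1 := Filter.Tendsto.pos_mul_atTop hν0 hn hk
      apply h1.congr'
      filter_upwards [hkpos] with i hki
      field_simp
    have hpn : Filter.Tendsto (fun i => (ℓ i : ℝ) / (n i : ℝ)) Filter.atTop
        (nhds (lam / ν)) := by
      have h1 := hℓ.div hn (ne_of_gt hν0)
      apply h1.congr'
      filter_upwards [hkpos] with i hki
      by_cases hni : (n i : ℝ) = 0
      · simp [hni]
      · simp only [Pi.div_apply]
        field_simp
    have hev : ∀ᶠ i in Filter.atTop, 1 ≤ ℓ i ∧ 2 * ℓ i < n i := by
      filter_upwards [hℓatTop.eventually_ge_atTop 1, hpn.eventually (gt_mem_nhds hlt),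
        hnatTop.eventually_gt_atTop 0] with i h1 h2 h3
      have hl1 : 1 ≤ ℓ i := by exact_mod_cast h1
      refine ⟨hl1, ?_⟩
      have h4 : (ℓ i : ℝ) < (1/2) * (n i : ℝ) := by
        rw [div_lt_iff₀ h3] at h2; linarith
      have : (2 * ℓ i : ℝ) < (n i : ℝ) := by push_cast; linarith
      exact_mod_cast this
    have hbound : ∀ᶠ i in Filter.atTop, (1:ℝ) ≤
        Real.logb 2 (2 * (ℓ i : ℝ) + 1) / (k i : ℝ) +
          ((n i : ℝ) / (k i : ℝ)) * binH ((ℓ i : ℝ) / (n i : ℝ)) := by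
      filter_upwards [hev, hkpos] with i hi hki
      obtain ⟨h1, h2⟩ := hi
      have hnat := protocol_card_bound h1 (le_of_lt h2) (hproto i)
      have hreal : (2:ℝ) ^ (k i) ≤ (2 * (ℓ i : ℝ) + 1) * ((n i).choose (ℓ i) : ℝ) := by
        exact_mod_cast hnat
      have hchoosepos : (0:ℝ) < ((n i).choose (ℓ i) : ℝ) := by
        exact_mod_cast Nat.choose_pos (by omega : ℓ i ≤ n i)
      have hlogb : (k i : ℝ) ≤ Real.logb 2 (2 * (ℓ i : ℝ) + 1) +
          (n i : ℝ) * binH ((ℓ i : ℝ) / (n i : ℝ)) := by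
        have h2pow : Real.logb 2 ((2:ℝ) ^ (k i)) = (k i : ℝ) := by
          rw [Real.logb_pow, Real.logb_self_eq_one (by norm_num)]; ring
        have hmono : Real.logb 2 ((2:ℝ) ^ (k i)) ≤
            Real.logb 2 ((2 * (ℓ i : ℝ) + 1) * ((n i).choose (ℓ i) : ℝ)) :=
          (Real.logb_le_logb (by norm_num) (by positivity) (by positivity)).mpr hreal
        rw [h2pow, Real.logb_mul (by positivity) (ne_of_gt hchoosepos)] at hmono
        have hent := logb_choose_le h1 (by omega : ℓ i < n i)
        linarith
      rw [show Real.logb 2 (2 * (ℓ i : ℝ) + 1) / (k i : ℝ) +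
            ((n i : ℝ) / (k i : ℝ)) * binH ((ℓ i : ℝ) / (n i : ℝ)) =
          (Real.logb 2 (2 * (ℓ i : ℝ) + 1) +
            (n i : ℝ) * binH ((ℓ i : ℝ) / (n i : ℝ))) / (k i : ℝ) by ring,
        le_div_iff₀ hki, one_mul]
      exact hlogb
    have hg : Filter.Tendsto (fun i => Real.logb 2 (2 * (ℓ i : ℝ) + 1) / (k i : ℝ) +
        ((n i : ℝ) / (k i : ℝ)) * binH ((ℓ i : ℝ) / (n i : ℝ))) Filter.atTop
        (nhds (0 + ν * binH (lam / ν))) := by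
      apply Filter.Tendsto.add
      · have hA : Filter.Tendsto (fun i => 2 * (ℓ i : ℝ) + 1) Filter.atTop Filter.atTop :=
          Filter.tendsto_atTop_add_const_right _ 1
            (hℓatTop.const_mul_atTop (by norm_num : (0:ℝ) < 2))
        have hB : Filter.Tendsto (fun x : ℝ => Real.log x / x) Filter.atTop (nhds 0) :=
          Real.isLittleO_log_id_atTop.tendsto_div_nhds_zero
        have hC : Filter.Tendsto (fun i => (2 * (ℓ i : ℝ) + 1) / (k i : ℝ)) Filter.atTop
            (nhds (2 * lam + 0)) := by
          have h1 := (hℓ.const_mul 2).add hk.inv_tendsto_atTop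
          apply h1.congr
          intro i
          simp only [Pi.inv_apply]
          ring
        have hzero := (hB.comp hA).mul hC
        rw [zero_mul] at hzero
        have hzero2 := hzero.div_const (Real.log 2)
        rw [zero_div] at hzero2
        apply hzero2.congr
        intro i
        have hx : (0:ℝ) < 2 * (ℓ i : ℝ) + 1 := by positivity
        simp only [Function.comp_apply, Real.logb]
        field_simp
      · exact hn.mul ((hcont.tendsto (lam / ν)).comp hpn)
    have hfinal := ge_of_tendsto hg hbound
    linarith [hfinal, mul_comm ν (binH (lam / ν))]
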